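/- Assume the near-isometry condition |⟨u,v⟩_{[n]} − ⟨u,v⟩_μ| ≤ χ·‖u‖_μ·‖v‖_μ holds for all u,v ∈ H with some χ ≤ 1/2. Let w⋆, w̃, w̄ ∈ H be such that ⟨w̃, f⟩_μ = ⟨w̄, f⟩_{[n]} for every f ∈ H. Then ‖w̄ − w⋆‖_{[n]} ≤ (1 + 3χ)·‖w̃ − w⋆‖_μ + 2χ·‖w⋆‖_μ. -/
import Mathlib


open Finset

set_option maxHeartbeats 1000000

/-- weighted Cauchy–Schwarz -/
lemma wcs {X : Type*} [Fintype X] (μ : X → ℝ) (hμ0 : ∀ x, 0 ≤ μ x) (u v : X → ℝ) :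
    ∑ x, μ x * u x * v x ≤
      Real.sqrt (∑ x, μ x * u x ^ 2) * Real.sqrt (∑ x, μ x * v x ^ 2) := by
  have h := Real.sum_mul_le_sqrt_mul_sqrt Finset.univ
      (fun x => Real.sqrt (μ x) * u x) (fun x => Real.sqrt (μ x) * v x)
  have e : ∀ (w : X → ℝ) (x : X), (Real.sqrt (μ x) * w x) ^ 2 = μ x * w x ^ 2 := by
    intro w x
    rw [mul_pow, Real.sq_sqrt (hμ0 x)]
  calc ∑ x, μ x * u x * v x
      = ∑ x, (Real.sqrt (μ x) * u x) * (Real.sqrt (μ x) * v x) := by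
        refine Finset.sum_congr rfl fun x _ => ?_
        rw [show (Real.sqrt (μ x) * u x) * (Real.sqrt (μ x) * v x)
            = (Real.sqrt (μ x) * Real.sqrt (μ x)) * (u x * v x) by ring,
          Real.mul_self_sqrt (hμ0 x)]; ring
    _ ≤ _ := by
        refine h.trans_eq ?_
        congr 1 <;> · congr 1; exact Finset.sum_congr rfl fun x _ => e _ x

/-- tracking error conversion: under the near-isometry condition
`|⟨u,v⟩_{[n]} − ⟨u,v⟩_μ| ≤ χ‖u‖_μ‖v‖_μ` on `H` with `χ ≤ 1/2`, if `w⋆, w̃, w̄ ∈ H`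
and `⟨w̃,f⟩_μ = ⟨w̄,f⟩_{[n]}` for all `f ∈ H`, then
`‖w̄ − w⋆‖_{[n]} ≤ (1+3χ)‖w̃ − w⋆‖_μ + 2χ‖w⋆‖_μ`. -/
theorem stmt_18 {X : Type*} [Fintype X] (n : ℕ) (hn : 0 < n)
    (μ : X → ℝ) (hμ0 : ∀ x, 0 ≤ μ x) (hμ1 : ∑ x, μ x = 1)
    (H : Submodule ℝ (X → ℝ))
    (hnorm : ∀ f ∈ H, (∑ x, μ x * f x ^ 2 = 0) → f = 0)
    (xs : Fin n → X) (χ : ℝ) (hχ : χ ≤ 1 / 2)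
    (hiso : ∀ u ∈ H, ∀ v ∈ H,
      |(n : ℝ)⁻¹ * ∑ i, u (xs i) * v (xs i) - ∑ x, μ x * u x * v x| ≤
        χ * Real.sqrt (∑ x, μ x * u x ^ 2) * Real.sqrt (∑ x, μ x * v x ^ 2))
    (wstar wtil wbar : X → ℝ)
    (hwstar : wstar ∈ H) (hwtil : wtil ∈ H) (hwbar : wbar ∈ H)
    (hrep : ∀ f ∈ H, ∑ x, μ x * wtil x * f x = (n : ℝ)⁻¹ * ∑ i, wbar (xs i) * f (xs i)) :
    Real.sqrt ((n : ℝ)⁻¹ * ∑ i, (wbar (xs i) - wstar (xs i)) ^ 2) ≤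
      (1 + 3 * χ) * Real.sqrt (∑ x, μ x * (wtil x - wstar x) ^ 2) +
        2 * χ * Real.sqrt (∑ x, μ x * wstar x ^ 2) := by
  classical
  set f : X → ℝ := wbar - wstar with hfdef
  have hfH : f ∈ H := Submodule.sub_mem H hwbar hwstar
  have hfapp : ∀ x, f x = wbar x - wstar x := fun x => rfl
  have hNμ : ∀ g : X → ℝ, 0 ≤ ∑ x, μ x * g x ^ 2 := fun g =>
    Finset.sum_nonneg fun x _ => mul_nonneg (hμ0 x) (sq_nonneg _)
  set S := Real.sqrt (∑ x, μ x * wstar x ^ 2) with hSdef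
  set D := Real.sqrt (∑ x, μ x * (wtil x - wstar x) ^ 2) with hDdef
  set b := Real.sqrt (∑ x, μ x * f x ^ 2) with hbdef
  have hS0 : 0 ≤ S := Real.sqrt_nonneg _
  have hD0 : 0 ≤ D := Real.sqrt_nonneg _
  have hb0 : 0 ≤ b := Real.sqrt_nonneg _
  have hb2 : b ^ 2 = ∑ x, μ x * f x ^ 2 := Real.sq_sqrt (hNμ f)
  set a2 : ℝ := (n : ℝ)⁻¹ * ∑ i, (wbar (xs i) - wstar (xs i)) ^ 2 with ha2def
  have hn0 : (0:ℝ) < (n : ℝ)⁻¹ := by positivity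
  have ha20 : 0 ≤ a2 := by
    apply mul_nonneg hn0.le
    exact Finset.sum_nonneg fun i _ => sq_nonneg _
  -- case χ < 0 : everything in H is zero
  by_cases hχ0 : 0 ≤ χ
  swap
  · push_neg at hχ0
    have hz : ∀ g ∈ H, g = 0 := by
      intro g hg
      have h := hiso g hg g hg
      have h2 : 0 ≤ χ * Real.sqrt (∑ x, μ x * g x ^ 2) * Real.sqrt (∑ x, μ x * g x ^ 2) :=
        le_trans (abs_nonneg _) h
      have h3 : χ * (Real.sqrt (∑ x, μ x * g x ^ 2) * Real.sqrt (∑ x, μ x * g x ^ 2)) ≤ 0 :=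
        mul_nonpos_of_nonpos_of_nonneg hχ0.le (mul_nonneg (Real.sqrt_nonneg _) (Real.sqrt_nonneg _))
    -- hence the sqrt is zero
      have h4 : Real.sqrt (∑ x, μ x * g x ^ 2) * Real.sqrt (∑ x, μ x * g x ^ 2) = 0 := by
        rcases lt_trichotomy (Real.sqrt (∑ x, μ x * g x ^ 2)) 0 with hlt | heq | hgt
        · exact absurd hlt (not_lt.2 (Real.sqrt_nonneg _))
        · rw [heq]; ring
        · nlinarith [mul_assoc χ (Real.sqrt (∑ x, μ x * g x ^ 2)) (Real.sqrt (∑ x, μ x * g x ^ 2))]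
      have h5 : ∑ x, μ x * g x ^ 2 = 0 := by
        rw [Real.mul_self_sqrt (hNμ g)] at h4; exact h4
      exact hnorm g hg h5
    have hfz : f = 0 := hz f hfH
    have hwz : wstar = 0 := hz wstar hwstar
    have hdz : wtil - wstar = 0 := hz _ (Submodule.sub_mem H hwtil hwstar)
    have hD' : D = 0 := by
      rw [hDdef]
      have : ∀ x, wtil x - wstar x = 0 := fun x => congrFun hdz x
      simp [this]
    have hS' : S = 0 := by
      rw [hSdef]
      have : ∀ x, wstar x = 0 := fun x => congrFun hwz x
      simp [this]
    have hL : a2 = 0 := by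
      rw [ha2def]
      have : ∀ i, wbar (xs i) - wstar (xs i) = 0 := by
        intro i
        have := congrFun hfz (xs i)
        simpa [hfapp] using this
      simp [this]
    rw [hL, hD', hS']
    simp
  -- main case χ ≥ 0
  -- step 1 : a2 ≤ D * b + χ * S * b
  have hsums : a2 = ((n : ℝ)⁻¹ * ∑ i, wbar (xs i) * f (xs i))
      - ((n : ℝ)⁻¹ * ∑ i, wstar (xs i) * f (xs i)) := by
    rw [ha2def, ← mul_sub, ← Finset.sum_sub_distrib]
    congr 1
    refine Finset.sum_congr rfl fun i _ => ?_
    rw [hfapp]; ring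
  have hrepf : ∑ x, μ x * wtil x * f x = (n : ℝ)⁻¹ * ∑ i, wbar (xs i) * f (xs i) :=
    hrep f hfH
  have hsplit : ∑ x, μ x * wtil x * f x
      = (∑ x, μ x * (wtil x - wstar x) * f x) + ∑ x, μ x * wstar x * f x := by
    rw [← Finset.sum_add_distrib]
    exact Finset.sum_congr rfl fun x _ => by ring
  have hCS : ∑ x, μ x * (wtil x - wstar x) * f x ≤ D * b := by
    have := wcs μ hμ0 (fun x => wtil x - wstar x) f
    simpa [hDdef, hbdef] using this
  have hiso1 : ∑ x, μ x * wstar x * f x - (n : ℝ)⁻¹ * ∑ i, wstar (xs i) * f (xs i)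
      ≤ χ * S * b := by
    have h := hiso wstar hwstar f hfH
    have := abs_le.1 h
    linarith [this.1]
  have key1 : a2 ≤ D * b + χ * S * b := by
    rw [hsums, ← hrepf, hsplit]
    linarith [hCS, hiso1]
  -- step 2 : (1 - χ) * b^2 ≤ a2
  have hisoff := hiso f hfH f hfH
  have hff : (n : ℝ)⁻¹ * ∑ i, f (xs i) * f (xs i) = a2 := by
    rw [ha2def]
    congr 1
    exact Finset.sum_congr rfl fun i _ => by rw [hfapp]; ring
  have hsqff : ∑ x, μ x * f x * f x = ∑ x, μ x * f x ^ 2 := by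
    exact Finset.sum_congr rfl fun x _ => by ring
  have key2 : (1 - χ) * b ^ 2 ≤ a2 := by
    rw [hff, hsqff, ← hb2, Real.sqrt_sq hb0] at hisoff
    have h5 := (abs_le.1 hisoff).1
    nlinarith [h5]
  -- step 3 : b * (1 - χ) ≤ D + χ * S
  have key3 : (1 - χ) * b ≤ D + χ * S := by
    rcases eq_or_lt_of_le hb0 with hb | hb
    · rw [← hb]; nlinarith
    · have h1 : (1 - χ) * b * b ≤ (D + χ * S) * b := by
        nlinarith [key1, key2]
      exact le_of_mul_le_mul_right (by nlinarith) hb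
  -- combine : a2 ≤ ((1+3χ)D + 2χS)^2
  have hT0 : 0 ≤ (1 + 3 * χ) * D + 2 * χ * S := by positivity
  have hc : (0:ℝ) ≤ 1/2 - χ := by linarith
  have h6 : (1 - χ) * a2 ≤ (D + χ * S) ^ 2 := by
    have h1χ : (0:ℝ) ≤ 1 - χ := by linarith
    have hE0 : 0 ≤ D + χ * S := by positivity
    nlinarith [mul_le_mul_of_nonneg_left key1 h1χ, mul_le_mul_of_nonneg_left key3 hE0]
  have h8 : (D + χ * S) ^ 2 ≤ (1 - χ) * ((1 + 3 * χ) * D + 2 * χ * S) ^ 2 := by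
    nlinarith [mul_nonneg (mul_nonneg hχ0 hc) (sq_nonneg D),
      mul_nonneg (mul_nonneg hχ0 hc) (sq_nonneg S),
      mul_nonneg (mul_nonneg hχ0 hc) (mul_nonneg hD0 hS0),
      mul_nonneg (mul_nonneg (mul_nonneg hχ0 hχ0) hc) (sq_nonneg D),
      mul_nonneg (mul_nonneg (mul_nonneg hχ0 hχ0) hc) (sq_nonneg S),
      mul_nonneg (mul_nonneg (mul_nonneg hχ0 hχ0) hc) (mul_nonneg hD0 hS0),
      mul_nonneg hχ0 (sq_nonneg D), mul_nonneg hχ0 (sq_nonneg S),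
      mul_nonneg hχ0 (mul_nonneg hD0 hS0),
      mul_nonneg (mul_nonneg hχ0 hχ0) (mul_nonneg hD0 hS0),
      mul_nonneg (mul_nonneg hχ0 hχ0) (sq_nonneg S),
      mul_nonneg (mul_nonneg hχ0 hχ0) (sq_nonneg D)]
  have hfinal : a2 ≤ ((1 + 3 * χ) * D + 2 * χ * S) ^ 2 := by
    have h9 : (1 - χ) * a2 ≤ (1 - χ) * ((1 + 3 * χ) * D + 2 * χ * S) ^ 2 := h6.trans h8
    exact le_of_mul_le_mul_left h9 (by linarith)
  calc Real.sqrt a2 ≤ Real.sqrt (((1 + 3 * χ) * D + 2 * χ * S) ^ 2) :=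
        Real.sqrt_le_sqrt hfinal
    _ = (1 + 3 * χ) * D + 2 * χ * S := Real.sqrt_sq hT0
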